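/- With ω and W as above, liminf_{|z|→∞} V(z) > 0, where V is the averaged potential. -/

import Mathlib

open MeasureTheory Metric Set Filter Topology
open scoped ENNReal NNReal RealInnerProductSpace

/-- `ω ⊂ ℝ^m` has Lipschitz boundary: near each boundary point, in a suitable orthonormal
splitting of `ℝ^m` into a unit direction `u` and its orthogonal complement, `ω` is the open
hypograph/epigraph of a Lipschitz function. -/
def LipschitzBoundary {m : ℕ} (ω : Set (EuclideanSpace ℝ (Fin m))) : Prop :=
  ∀ p ∈ frontier ω, ∃ u : EuclideanSpace ℝ (Fin m), ‖u‖ = 1 ∧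
    ∃ (φ : EuclideanSpace ℝ (Fin m) → ℝ) (K : ℝ≥0) (r : ℝ), 0 < r ∧ LipschitzWith K φ ∧
      ∀ x ∈ Metric.ball p r, (x ∈ ω ↔ φ (x - ⟪x, u⟫ • u) < ⟪x, u⟫)

/-- Membership in `H¹(ω, ℝ^N)` (encoded for an everywhere-defined representative via
differentiability on `ω` together with integrability of the map and of `|∇v|²`). -/
def MemH1 {m N : ℕ} (ω : Set (EuclideanSpace ℝ (Fin m)))
    (v : EuclideanSpace ℝ (Fin m) → EuclideanSpace ℝ (Fin N)) : Prop :=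
  DifferentiableOn ℝ v ω ∧ MeasureTheory.IntegrableOn v ω ∧
    (∫⁻ x in ω, (‖fderivWithin ℝ v ω x‖₊ : ℝ≥0∞) ^ 2) < ⊤

/-- The averaged energy `e(v) = ⨍_ω (|∇v|² + W(v))`. -/
noncomputable def eAvg {m N : ℕ} (W : EuclideanSpace ℝ (Fin N) → ℝ≥0∞)
    (ω : Set (EuclideanSpace ℝ (Fin m)))
    (v : EuclideanSpace ℝ (Fin m) → EuclideanSpace ℝ (Fin N)) : ℝ≥0∞ :=
  (volume ω)⁻¹ * ∫⁻ x in ω, ((‖fderivWithin ℝ v ω x‖₊ : ℝ≥0∞) ^ 2 + W (v x))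

/-- The averaged potential
`V(z) = inf { ⨍_ω (|∇v|² + W(v)) : v ∈ H¹(ω,ℝ^N), ⨍_ω v = z }`. -/
noncomputable def Vavg {m N : ℕ} (W : EuclideanSpace ℝ (Fin N) → ℝ≥0∞)
    (ω : Set (EuclideanSpace ℝ (Fin m))) (z : EuclideanSpace ℝ (Fin N)) : ℝ≥0∞ :=
  ⨅ v ∈ {v : EuclideanSpace ℝ (Fin m) → EuclideanSpace ℝ (Fin N) |
      MemH1 ω v ∧ (⨍ x in ω, v x) = z}, eAvg W ω v


namespace Statement8

variable {m N : ℕ}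

local notation "Em" => EuclideanSpace ℝ (Fin m)
local notation "Fn" => EuclideanSpace ℝ (Fin N)

lemma ofReal_norm_eq_coe_nnnorm {E : Type*} [NormedAddCommGroup E] (a : E) :
    ENNReal.ofReal ‖a‖ = (‖a‖₊ : ℝ≥0∞) :=
  ofReal_norm a

lemma ofReal_integral_norm_eq_lintegral_nnnorm {α P : Type*} [MeasurableSpace α] {μ : Measure α}
    [NormedAddCommGroup P] {f : α → P} (hf : Integrable f μ) :
    ENNReal.ofReal (∫ x, ‖f x‖ ∂μ) = ∫⁻ x, (‖f x‖₊ : ℝ≥0∞) ∂μ :=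
  ofReal_integral_norm_eq_lintegral_enorm hf

lemma mul_le_mul_left' {b c : ℝ≥0∞} (h : b ≤ c) (a : ℝ≥0∞) : a * b ≤ a * c := by gcongr

lemma mul_le_mul_right' {b c : ℝ≥0∞} (h : b ≤ c) (a : ℝ≥0∞) : b * a ≤ c * a := by gcongr

noncomputable def gg (v : EuclideanSpace ℝ (Fin m) → EuclideanSpace ℝ (Fin N)) :
    EuclideanSpace ℝ (Fin m) → ℝ≥0∞ := fun x => (‖fderiv ℝ v x‖₊ : ℝ≥0∞)

lemma gg_meas (v : Em → Fn) : Measurable (gg v) :=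
  (measurable_fderiv ℝ v).nnnorm.coe_nnreal_ennreal

lemma seg_bound {ω : Set Em} (hωo : IsOpen ω) {v : Em → Fn} (hv : DifferentiableOn ℝ v ω)
    {x b : Em} (hseg : ∀ t ∈ Icc (0:ℝ) 1, x + t • b ∈ ω) :
    (‖v (x + b) - v x‖₊ : ℝ≥0∞) ≤ ‖b‖₊ * ∫⁻ t in Icc (0:ℝ) 1, gg v (x + t • b) := by
  rcases eq_or_ne b 0 with rfl | hb
  · simp
  by_cases hI : (∫⁻ t in Icc (0:ℝ) 1, gg v (x + t • b)) = ⊤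
  · rw [hI, ENNReal.mul_top (by simpa using hb)]
    exact le_top
  set ψ : ℝ → Fn := fun t => fderiv ℝ v (x + t • b) b with hψ
  have hline : ∀ t : ℝ, HasDerivAt (fun s : ℝ => x + s • b) b t := fun t => by
    simpa using ((hasDerivAt_id t).smul_const b).const_add x
  have hder : ∀ t ∈ Icc (0:ℝ) 1, HasDerivAt (fun s => v (x + s • b)) (ψ t) t := by
    intro t ht
    have hx : x + t • b ∈ ω := hseg t ht
    have hfd : HasFDerivAt v (fderiv ℝ v (x + t • b)) (x + t • b) :=
      (hv.differentiableAt (hωo.mem_nhds hx)).hasFDerivAt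
    exact hfd.comp_hasDerivAt t (hline t)
  have hmes1 : Measurable fun t : ℝ => fderiv ℝ v (x + t • b) :=
    (measurable_fderiv ℝ v).comp (by fun_prop)
  have hmes : Measurable ψ :=
    (ContinuousLinearMap.apply ℝ Fn b).continuous.measurable.comp hmes1
  have hint_g : IntegrableOn (fun t => ‖fderiv ℝ v (x + t • b)‖) (Icc (0:ℝ) 1) := by
    refine ⟨hmes1.norm.aestronglyMeasurable, ?_⟩
    refine lt_of_le_of_lt ?_ (Ne.lt_top hI)
    refine le_of_eq (lintegral_congr fun t => ?_)
    simp [gg, NNReal.nnnorm_eq, ← coe_nnnorm, nnnorm_norm]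
  have hψint : IntervalIntegrable ψ volume 0 1 := by
    have hio : IntegrableOn ψ (Icc (0:ℝ) 1) := by
      refine Integrable.mono' (hint_g.mul_const ‖b‖) hmes.aestronglyMeasurable ?_
      filter_upwards with t using (fderiv ℝ v (x + t • b)).le_opNorm b
    rw [← uIcc_of_le (zero_le_one (α := ℝ))] at hio
    exact hio.intervalIntegrable
  have hFTC : ∫ t in (0:ℝ)..1, ψ t = v (x + b) - v x := by
    have := intervalIntegral.integral_eq_sub_of_hasDerivAt
      (f := fun s : ℝ => v (x + s • b)) (f' := ψ)
      (by rw [uIcc_of_le (zero_le_one (α := ℝ))]; exact hder) hψint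
    simpa using this
  have hreal : ‖v (x + b) - v x‖ ≤ ‖b‖ * ∫ t in Icc (0:ℝ) 1, ‖fderiv ℝ v (x + t • b)‖ := by
    rw [← hFTC]
    have h1 : ‖∫ t in (0:ℝ)..1, ψ t‖ ≤ ∫ t in (0:ℝ)..1, ‖ψ t‖ :=
      intervalIntegral.norm_integral_le_integral_norm zero_le_one
    have h2 : ∫ t in (0:ℝ)..1, ‖ψ t‖ = ∫ t in Icc (0:ℝ) 1, ‖ψ t‖ := by
      rw [intervalIntegral.integral_of_le zero_le_one, integral_Icc_eq_integral_Ioc]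
    have h3 : ∫ t in Icc (0:ℝ) 1, ‖ψ t‖ ≤ ∫ t in Icc (0:ℝ) 1, ‖fderiv ℝ v (x + t • b)‖ * ‖b‖ := by
      have hψi : IntegrableOn (fun t => ‖ψ t‖) (Icc (0:ℝ) 1) := by
        refine ⟨hmes.norm.aestronglyMeasurable, ?_⟩
        exact (Integrable.mono' (hint_g.mul_const ‖b‖) hmes.aestronglyMeasurable
            (by filter_upwards with t using (fderiv ℝ v (x + t • b)).le_opNorm b)).2.norm
      exact setIntegral_mono_on hψi (hint_g.mul_const ‖b‖) measurableSet_Icc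
        fun t _ => (fderiv ℝ v (x + t • b)).le_opNorm b
    have h4 : ∫ t in Icc (0:ℝ) 1, ‖fderiv ℝ v (x + t • b)‖ * ‖b‖
        = ‖b‖ * ∫ t in Icc (0:ℝ) 1, ‖fderiv ℝ v (x + t • b)‖ := by
      rw [integral_mul_const]; ring
    linarith [le_trans (h2 ▸ h1) h3]
  calc (‖v (x + b) - v x‖₊ : ℝ≥0∞) = ENNReal.ofReal ‖v (x + b) - v x‖ :=
        (ofReal_norm_eq_coe_nnnorm _).symm
    _ ≤ ENNReal.ofReal (‖b‖ * ∫ t in Icc (0:ℝ) 1, ‖fderiv ℝ v (x + t • b)‖) :=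
        ENNReal.ofReal_le_ofReal hreal
    _ = ‖b‖₊ * ENNReal.ofReal (∫ t in Icc (0:ℝ) 1, ‖fderiv ℝ v (x + t • b)‖) := by
        rw [ENNReal.ofReal_mul (norm_nonneg b), ofReal_norm_eq_coe_nnnorm]
    _ = ‖b‖₊ * ∫⁻ t in Icc (0:ℝ) 1, gg v (x + t • b) := by
        rw [ofReal_integral_eq_lintegral_ofReal hint_g
          (by filter_upwards with t using norm_nonneg _)]
        congr 1
        refine lintegral_congr fun t => ?_
        simp [gg, ofReal_norm_eq_coe_nnnorm, enorm_eq_nnnorm]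


/-- shift a set lintegral by translation. -/
lemma shift_setLIntegral (g : Em → ℝ≥0∞) (S : Set Em) (c : Em) :
    ∫⁻ w in S, g (w + c) = ∫⁻ y in (fun w => w + c) '' S, g y := by
  have hemb : MeasurableEmbedding (fun w : Em => w + c) :=
    (MeasurableEquiv.addRight c).measurableEmbedding
  have hmp : MeasurePreserving (fun w : Em => w + c) volume volume :=
    measurePreserving_add_right volume c
  have := hmp.setLIntegral_comp_preimage_emb hemb g ((fun w : Em => w + c) '' S)
  rw [← this, Set.preimage_image_eq _ (fun a b hab => by simpa using hab)]

lemma translate_lintegral_bound {ω : Set Em} (hωo : IsOpen ω) {v : Em → Fn}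
    (hv : DifferentiableOn ℝ v ω) {S : Set Em} {b : Em}
    (hseg : ∀ w ∈ S, ∀ t ∈ Icc (0:ℝ) 1, w + t • b ∈ ω) :
    ∫⁻ w in S, (‖v (w + b) - v w‖₊ : ℝ≥0∞) ≤ ‖b‖₊ * ∫⁻ x in ω, gg v x := by
  have hjm : Measurable fun p : Em × ℝ => gg v (p.1 + p.2 • b) :=
    (gg_meas v).comp (by fun_prop)
  have hinner_meas : Measurable fun w : Em => ∫⁻ t in Icc (0:ℝ) 1, gg v (w + t • b) :=
    Measurable.lintegral_prod_right (f := fun w t => gg v (w + t • b)) hjm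
  calc ∫⁻ w in S, (‖v (w + b) - v w‖₊ : ℝ≥0∞)
      ≤ ∫⁻ w in S, ‖b‖₊ * ∫⁻ t in Icc (0:ℝ) 1, gg v (w + t • b) :=
        setLIntegral_mono (by fun_prop) (fun w hw => seg_bound hωo hv (hseg w hw))
    _ = ‖b‖₊ * ∫⁻ w in S, ∫⁻ t in Icc (0:ℝ) 1, gg v (w + t • b) :=
        lintegral_const_mul _ hinner_meas
    _ = ‖b‖₊ * ∫⁻ t in Icc (0:ℝ) 1, ∫⁻ w in S, gg v (w + t • b) := by
        rw [lintegral_lintegral_swap (hjm.aemeasurable)]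
    _ ≤ ‖b‖₊ * ∫⁻ t in Icc (0:ℝ) 1, ∫⁻ x in ω, gg v x := by
        refine mul_le_mul_left' (setLIntegral_mono measurable_const fun t ht => ?_) _
        rw [shift_setLIntegral]
        refine lintegral_mono_set ?_
        rintro y ⟨w, hw, rfl⟩
        exact hseg w hw t ht
    _ = ‖b‖₊ * ∫⁻ x in ω, gg v x := by
        rw [setLIntegral_const, Real.volume_Icc]
        simp


/-- Measurable global extension. -/
lemma measurable_piecewise_ext {ω : Set Em} [∀ j, Decidable (j ∈ ω)] (hωo : IsOpen ω)
    {v : Em → Fn} (hc : ContinuousOn v ω) : Measurable (ω.piecewise v 0) := by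
  refine measurable_of_isOpen fun U hU => ?_
  rw [Set.piecewise_preimage]
  simp only [Set.ite]
  refine MeasurableSet.union ?_ ?_
  · rw [inter_comm]
    exact (hc.isOpen_inter_preimage hωo hU).measurableSet
  · exact (measurable_const (a := (0:Fn)) hU.measurableSet).diff hωo.measurableSet

/-- Mollified function. -/
noncomputable def FF (v : Em → Fn) (ρ : ℝ) (x : Em) : Fn := ⨍ y in ball x ρ, v y

lemma image_add_ball (x : Em) (ρ : ℝ) : (fun w : Em => w + x) '' ball 0 ρ = ball x ρ := by
  rw [image_add_right]
  ext y
  simp [mem_ball, dist_eq_norm, sub_eq_add_neg]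

lemma preimage_add_ball (x : Em) (ρ : ℝ) : (fun h : Em => x + h) ⁻¹' ball x ρ = ball 0 ρ := by
  ext h; simp [mem_ball, dist_eq_norm]

lemma vol_ball_eq (x : Em) (ρ : ℝ) : volume (ball x ρ) = volume (ball (0:Em) ρ) :=
  Measure.addHaar_ball_center volume x ρ

lemma integral_ball_shift (v : Em → Fn) (x : Em) (ρ : ℝ) :
    ∫ y in ball x ρ, v y = ∫ h in ball (0:Em) ρ, v (x + h) := by
  have h := (measurePreserving_add_left volume x).setIntegral_preimage_emb
    (MeasurableEquiv.addLeft x).measurableEmbedding v (ball x ρ)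
  rw [preimage_add_ball] at h
  exact h.symm

lemma integrableOn_ball_shift {v : Em → Fn} {x : Em} {ρ : ℝ}
    (h : IntegrableOn v (ball x ρ)) : IntegrableOn (fun h => v (x + h)) (ball (0:Em) ρ) := by
  have := ((measurePreserving_add_left volume x).integrableOn_comp_preimage
    (MeasurableEquiv.addLeft x).measurableEmbedding (f := v) (s := ball x ρ)).2 h
  rwa [preimage_add_ball] at this

lemma ofReal_toReal_inv (μB : ℝ≥0∞) (h0 : μB ≠ 0) (ht : μB ≠ ⊤) :
    ENNReal.ofReal (μB.toReal)⁻¹ = μB⁻¹ := by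
  rw [ENNReal.ofReal_inv_of_pos (ENNReal.toReal_pos h0 ht), ENNReal.ofReal_toReal ht]

/-- Pointwise deviation bound from the mollified average. -/
lemma dev_pointwise {ω : Set Em} {v : Em → Fn} (hvi : IntegrableOn v ω) {ρ : ℝ}
    (hρ : 0 < ρ) {w : Em} (hw : ball w ρ ⊆ ω) :
    ENNReal.ofReal ‖v w - FF v ρ w‖
      ≤ (volume (ball (0:Em) ρ))⁻¹ * ∫⁻ h in ball (0:Em) ρ, (‖v w - v (w + h)‖₊ : ℝ≥0∞) := by
  set μB := volume (ball (0:Em) ρ) with hμB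
  have hμB0 : μB ≠ 0 := (measure_ball_pos volume _ hρ).ne'
  have hμBt : μB ≠ ⊤ := measure_ball_lt_top.ne
  have hvball : IntegrableOn v (ball w ρ) := hvi.mono_set hw
  have hconst : IntegrableOn (fun _ : Em => v w) (ball w ρ) :=
    integrableOn_const measure_ball_lt_top.ne enorm_ne_top
  have hvol : volume (ball w ρ) = μB := vol_ball_eq w ρ
  have hts : (μB.toReal)⁻¹ * μB.toReal = 1 :=
    inv_mul_cancel₀ (ENNReal.toReal_pos hμB0 hμBt).ne'
  have key : v w - FF v ρ w = (μB.toReal)⁻¹ • ∫ y in ball w ρ, (v w - v y) := by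
    rw [integral_sub hconst hvball, setIntegral_const, FF, setAverage_eq, measureReal_def, hvol, smul_sub,
      smul_smul, hts, one_smul]
  calc ENNReal.ofReal ‖v w - FF v ρ w‖
      = ENNReal.ofReal ((μB.toReal)⁻¹ * ‖∫ y in ball w ρ, (v w - v y)‖) := by
        rw [key, norm_smul, Real.norm_eq_abs, abs_of_nonneg (by positivity)]
    _ ≤ ENNReal.ofReal ((μB.toReal)⁻¹ * ∫ y in ball w ρ, ‖v w - v y‖) :=
        ENNReal.ofReal_le_ofReal
          (mul_le_mul_of_nonneg_left (norm_integral_le_integral_norm _) (by positivity))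
    _ = μB⁻¹ * ∫⁻ y in ball w ρ, (‖v w - v y‖₊ : ℝ≥0∞) := by
        rw [ENNReal.ofReal_mul (by positivity), ofReal_toReal_inv _ hμB0 hμBt,
          ofReal_integral_norm_eq_lintegral_nnnorm (f := fun y : Em => v w - v y)
            (hconst.sub hvball)]
    _ = μB⁻¹ * ∫⁻ h in ball (0:Em) ρ, (‖v w - v (w + h)‖₊ : ℝ≥0∞) := by
        congr 1
        have hs := shift_setLIntegral (fun y => (‖v w - v y‖₊ : ℝ≥0∞)) (ball 0 ρ) w
        rw [image_add_ball] at hs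
        rw [← hs]
        exact lintegral_congr fun h => by rw [add_comm]

/-- Integrated deviation bound. -/
lemma dev_lintegral_bound {ω : Set Em} (hωo : IsOpen ω) {v : Em → Fn}
    (hv : DifferentiableOn ℝ v ω) (hvm : Measurable v) (hvi : IntegrableOn v ω)
    {ρ : ℝ} (hρ : 0 < ρ) {S : Set Em} (hS : ∀ w ∈ S, ball w ρ ⊆ ω) :
    ∫⁻ w in S, ENNReal.ofReal ‖v w - FF v ρ w‖
      ≤ ENNReal.ofReal ρ * ∫⁻ x in ω, gg v x := by
  set μB := volume (ball (0:Em) ρ) with hμB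
  have hμB0 : μB ≠ 0 := (measure_ball_pos volume _ hρ).ne'
  have hμBt : μB ≠ ⊤ := measure_ball_lt_top.ne
  set G := ∫⁻ x in ω, gg v x with hG
  have hjointm : Measurable fun p : Em × Em => (‖v p.1 - v (p.1 + p.2)‖₊ : ℝ≥0∞) :=
    ((hvm.comp measurable_fst).sub
      (hvm.comp (measurable_fst.add measurable_snd))).nnnorm.coe_nnreal_ennreal
  have hinm : Measurable fun w : Em => ∫⁻ h in ball (0:Em) ρ, (‖v w - v (w + h)‖₊ : ℝ≥0∞) :=
    Measurable.lintegral_prod_right (f := fun w h => (‖v w - v (w + h)‖₊ : ℝ≥0∞)) hjointm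
  calc ∫⁻ w in S, ENNReal.ofReal ‖v w - FF v ρ w‖
      ≤ ∫⁻ w in S, μB⁻¹ * ∫⁻ h in ball (0:Em) ρ, (‖v w - v (w + h)‖₊ : ℝ≥0∞) :=
        setLIntegral_mono (hinm.const_mul _) fun w hw => dev_pointwise hvi hρ (hS w hw)
    _ = μB⁻¹ * ∫⁻ h in ball (0:Em) ρ, ∫⁻ w in S, (‖v w - v (w + h)‖₊ : ℝ≥0∞) := by
        rw [lintegral_const_mul _ hinm, lintegral_lintegral_swap hjointm.aemeasurable]
    _ ≤ μB⁻¹ * ∫⁻ h in ball (0:Em) ρ, (‖h‖₊ : ℝ≥0∞) * G := by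
        refine mul_le_mul_left' (setLIntegral_mono
          (measurable_nnnorm.coe_nnreal_ennreal.mul_const G) fun h hh => ?_) _
        have he : ∫⁻ w in S, (‖v w - v (w + h)‖₊ : ℝ≥0∞)
            = ∫⁻ w in S, (‖v (w + h) - v w‖₊ : ℝ≥0∞) :=
          lintegral_congr fun w => by
            rw [← ofReal_norm_eq_coe_nnnorm, ← ofReal_norm_eq_coe_nnnorm, norm_sub_rev]
        rw [he]
        refine translate_lintegral_bound hωo hv fun w hw t ht => hS w hw ?_
        rw [mem_ball, dist_eq_norm, add_sub_cancel_left, norm_smul, Real.norm_eq_abs]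
        have h1 : |t| ≤ 1 := abs_le.2 ⟨by linarith [ht.1], ht.2⟩
        calc |t| * ‖h‖ ≤ 1 * ‖h‖ := mul_le_mul_of_nonneg_right h1 (norm_nonneg _)
          _ = ‖h‖ := one_mul _
          _ < ρ := mem_ball_zero_iff.1 hh
    _ ≤ μB⁻¹ * (ENNReal.ofReal ρ * G * μB) := by
        refine mul_le_mul_left' ?_ _
        calc ∫⁻ h in ball (0:Em) ρ, (‖h‖₊ : ℝ≥0∞) * G
            ≤ ∫⁻ _ in ball (0:Em) ρ, ENNReal.ofReal ρ * G :=
              setLIntegral_mono measurable_const fun h hh => by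
                refine mul_le_mul_right' ?_ _
                rw [← ofReal_norm_eq_coe_nnnorm]
                exact ENNReal.ofReal_le_ofReal (le_of_lt (mem_ball_zero_iff.1 hh))
          _ = ENNReal.ofReal ρ * G * μB := setLIntegral_const _ _
    _ = ENNReal.ofReal ρ * G * (μB⁻¹ * μB) := by ring
    _ = ENNReal.ofReal ρ * G := by rw [ENNReal.inv_mul_cancel hμB0 hμBt, mul_one]

/-- Difference of mollified values. -/
lemma FF_diff_bound {ω : Set Em} (hωo : IsOpen ω) {v : Em → Fn}
    (hv : DifferentiableOn ℝ v ω) (hvi : IntegrableOn v ω) {ρ : ℝ} (hρ : 0 < ρ)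
    {x y : Em} (hsafe : ∀ h ∈ ball (0:Em) ρ, ∀ t ∈ Icc (0:ℝ) 1, (x + h) + t • (y - x) ∈ ω) :
    ENNReal.ofReal ‖FF v ρ x - FF v ρ y‖
      ≤ (volume (ball (0:Em) ρ))⁻¹ * ((‖y - x‖₊ : ℝ≥0∞) * ∫⁻ x in ω, gg v x) := by
  set μB := volume (ball (0:Em) ρ) with hμB
  have hμB0 : μB ≠ 0 := (measure_ball_pos volume _ hρ).ne'
  have hμBt : μB ≠ ⊤ := measure_ball_lt_top.ne
  set G := ∫⁻ x in ω, gg v x with hG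
  have hbx : ball x ρ ⊆ ω := fun w hw => by
    have h0 := hsafe (w - x) (by simpa [mem_ball, dist_eq_norm] using hw) 0
      ⟨le_refl 0, zero_le_one⟩
    simpa using h0
  have hby : ball y ρ ⊆ ω := fun w hw => by
    have h1 := hsafe (w - y) ?_ 1 ⟨zero_le_one, le_refl 1⟩
    · have e : x + (w - y) + (1:ℝ) • (y - x) = w := by rw [one_smul]; abel
      rwa [e] at h1
    · have e2 : x + (w - y) - x = w - y := by abel
      simpa [mem_ball, dist_eq_norm] using hw
  have hix : IntegrableOn (fun h => v (x + h)) (ball (0:Em) ρ) :=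
    integrableOn_ball_shift (hvi.mono_set hbx)
  have hiy : IntegrableOn (fun h => v (y + h)) (ball (0:Em) ρ) :=
    integrableOn_ball_shift (hvi.mono_set hby)
  have key : FF v ρ x - FF v ρ y
      = (μB.toReal)⁻¹ • ∫ h in ball (0:Em) ρ, (v (x + h) - v (y + h)) := by
    have e1 : (∫ yy in ball x ρ, v yy) = ∫ h in ball (0:Em) ρ, v (x + h) :=
      integral_ball_shift v x ρ
    have e2 : (∫ yy in ball y ρ, v yy) = ∫ h in ball (0:Em) ρ, v (y + h) :=
      integral_ball_shift v y ρ
    rw [FF, FF, setAverage_eq, setAverage_eq, measureReal_def, measureReal_def, vol_ball_eq x, vol_ball_eq y, e1, e2,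
      ← smul_sub, ← integral_sub hix hiy]
  calc ENNReal.ofReal ‖FF v ρ x - FF v ρ y‖
      = ENNReal.ofReal ((μB.toReal)⁻¹ * ‖∫ h in ball (0:Em) ρ, (v (x + h) - v (y + h))‖) := by
        rw [key, norm_smul, Real.norm_eq_abs, abs_of_nonneg (by positivity)]
    _ ≤ ENNReal.ofReal ((μB.toReal)⁻¹ * ∫ h in ball (0:Em) ρ, ‖v (x + h) - v (y + h)‖) :=
        ENNReal.ofReal_le_ofReal
          (mul_le_mul_of_nonneg_left (norm_integral_le_integral_norm _) (by positivity))
    _ = μB⁻¹ * ∫⁻ h in ball (0:Em) ρ, (‖v (x + h) - v (y + h)‖₊ : ℝ≥0∞) := by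
        rw [ENNReal.ofReal_mul (by positivity), ofReal_toReal_inv _ hμB0 hμBt,
          ofReal_integral_norm_eq_lintegral_nnnorm (f := fun h : Em => v (x + h) - v (y + h))
            (hix.sub hiy)]
    _ ≤ μB⁻¹ * ((‖y - x‖₊ : ℝ≥0∞) * G) := by
        refine mul_le_mul_left' ?_ _
        have hshift := shift_setLIntegral
          (fun w => (‖v (w + (y - x)) - v w‖₊ : ℝ≥0∞)) (ball 0 ρ) x
        rw [image_add_ball] at hshift
        have heq : ∫⁻ h in ball (0:Em) ρ, (‖v (x + h) - v (y + h)‖₊ : ℝ≥0∞)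
            = ∫⁻ h in ball (0:Em) ρ, (‖v ((h + x) + (y - x)) - v (h + x)‖₊ : ℝ≥0∞) := by
          refine lintegral_congr fun h => ?_
          have e1 : (h + x) + (y - x) = y + h := by abel
          have e2 : h + x = x + h := by abel
          rw [e1, e2, ← ofReal_norm_eq_coe_nnnorm, ← ofReal_norm_eq_coe_nnnorm, norm_sub_rev]
        rw [heq, hshift]
        refine translate_lintegral_bound hωo hv fun w hw t ht => ?_
        have hws := hsafe (w - x) (by simpa [mem_ball, dist_eq_norm] using hw) t ht
        have e : x + (w - x) + t • (y - x) = w + t • (y - x) := by abel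
        rwa [e] at hws


/-- ε-chains exist within preconnected sets. -/
lemma chain_exists {P : Set Em} (hP : IsPreconnected P) {ε : ℝ} (hε : 0 < ε)
    {x y : Em} (hx : x ∈ P) (hy : y ∈ P) :
    ∃ (n : ℕ) (c : ℕ → Em), c 0 = x ∧ c n = y ∧ (∀ i, i ≤ n → c i ∈ P) ∧
      ∀ i, i < n → dist (c i) (c (i+1)) < ε := by
  classical
  set U : Set Em := {q | q ∈ P ∧ ∃ (n : ℕ) (c : ℕ → Em), c 0 = x ∧ c n = q ∧
      (∀ i, i ≤ n → c i ∈ P) ∧ ∀ i, i < n → dist (c i) (c (i+1)) < ε} with hU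
  have hxU : x ∈ U := ⟨hx, 0, fun _ => x, rfl, rfl, fun i _ => hx, fun i hi => absurd hi (by omega)⟩
  -- extension: if u ∈ U and q ∈ P with dist u q < ε, then q ∈ U
  have hext : ∀ u ∈ U, ∀ q ∈ P, dist u q < ε → q ∈ U := by
    rintro u ⟨huP, n, c, hc0, hcn, hcP, hstep⟩ q hq hd
    refine ⟨hq, n + 1, fun i => if i ≤ n then c i else q, by simp [hc0], by simp, ?_, ?_⟩
    · intro i hi
      by_cases h : i ≤ n
      · simpa [h] using hcP i h
      · simpa [h] using hq
    · intro i hi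
      by_cases h : i < n
      · have h1 : i ≤ n := by omega
        have h2 : i + 1 ≤ n := by omega
        simpa [h1, h2] using hstep i h
      · have h1 : i = n := by omega
        have h2 : ¬ (n + 1 ≤ n) := by omega
        simpa [h1, h2, hcn] using hd
  by_contra hcon
  have hyU : y ∉ U := fun h => hcon h.2
  set V : Set Em := ⋃ u ∈ U, ball u ε with hV
  set V' : Set Em := ⋃ q ∈ P \ U, ball q ε with hV'
  have hVo : IsOpen V := isOpen_biUnion fun _ _ => isOpen_ball
  have hV'o : IsOpen V' := isOpen_biUnion fun _ _ => isOpen_ball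
  have hcover : P ⊆ V ∪ V' := by
    intro p hp
    by_cases h : p ∈ U
    · exact Or.inl (mem_biUnion h (mem_ball_self hε))
    · exact Or.inr (mem_biUnion ⟨hp, h⟩ (mem_ball_self hε))
  have hne1 : (P ∩ V).Nonempty := ⟨x, hx, mem_biUnion hxU (mem_ball_self hε)⟩
  have hne2 : (P ∩ V').Nonempty := ⟨y, hy, mem_biUnion ⟨hy, hyU⟩ (mem_ball_self hε)⟩
  obtain ⟨p, hpP, hpV, hpV'⟩ := hP V V' hVo hV'o hcover hne1 hne2
  obtain ⟨u, huU, hpu⟩ := mem_iUnion₂.1 hpV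
  obtain ⟨q, hqPU, hpq⟩ := mem_iUnion₂.1 hpV'
  have hpU : p ∈ U := hext u huU p hpP (by rwa [mem_ball, dist_comm] at hpu)
  exact hqPU.2 (hext p hpU q hqPU.1 (by rwa [mem_ball] at hpq))

/-- A compact subset of an open connected set is contained in a compact preconnected subset. -/
lemma exists_connected_compact_superset {ω : Set Em} (hωo : IsOpen ω) (hωc : IsConnected ω)
    {Q : Set Em} (hQ : IsCompact Q) (hQω : Q ⊆ ω) {q₀ : Em} (hq₀ : q₀ ∈ Q) :
    ∃ P : Set Em, IsCompact P ∧ IsPreconnected P ∧ Q ⊆ P ∧ P ⊆ ω ∧ q₀ ∈ P := by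
  classical
  have hpc : IsPathConnected ω := (hωo.isConnected_iff_isPathConnected).1 hωc
  -- radii
  have hrad : ∀ q : Em, q ∈ ω → ∃ δ : ℝ, 0 < δ ∧ closedBall q δ ⊆ ω := by
    intro q hq
    obtain ⟨r, hr, hrsub⟩ := Metric.isOpen_iff.1 hωo q hq
    exact ⟨r / 2, by linarith, (closedBall_subset_ball (by linarith)).trans hrsub⟩
  choose δ hδpos hδsub using fun q (hq : (q:Em) ∈ ω) => hrad q hq
  -- finite subcover of Q by balls centered in Q
  obtain ⟨t, ht⟩ := hQ.elim_finite_subcover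
    (fun q : Q => ball (q : Em) (δ q (hQω q.2)))
    (fun _ => isOpen_ball)
    (fun q hq => mem_iUnion.2 ⟨⟨q, hq⟩, mem_ball_self (hδpos _ _)⟩)
  -- pieces
  set C : Q → Set Em := fun q =>
    closedBall (q : Em) (δ q (hQω q.2)) ∪ range (hpc.joinedIn q₀ (hQω hq₀) q (hQω q.2)).somePath
    with hC
  have hCconn : ∀ q : Q, IsPreconnected (C q) := by
    intro q
    refine IsPreconnected.union (q : Em) (mem_closedBall_self (hδpos _ _).le) ?_
      (convex_closedBall _ _).isPreconnected (isPreconnected_range (Path.continuous _))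
    exact ⟨1, by simp⟩
  have hCq₀ : ∀ q : Q, q₀ ∈ C q := fun q => Or.inr ⟨0, by simp⟩
  have hCsub : ∀ q : Q, C q ⊆ ω := by
    intro q
    refine union_subset (hδsub _ _) ?_
    rintro _ ⟨s, rfl⟩
    exact (hpc.joinedIn q₀ (hQω hq₀) q (hQω q.2)).somePath_mem s
  have hCcomp : ∀ q : Q, IsCompact (C q) :=
    fun q => (isCompact_closedBall _ _).union (isCompact_range (Path.continuous _))
  refine ⟨(⋃ q ∈ t, C q) ∪ {q₀}, ?_, ?_, ?_, ?_, Or.inr rfl⟩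
  · exact (t.isCompact_biUnion fun q _ => hCcomp q).union isCompact_singleton
  · have key : IsPreconnected (⋃₀ (insert {q₀} ((fun q : Q => C q) '' ↑t))) := by
      refine isPreconnected_sUnion q₀ _ ?_ ?_
      · rintro s (rfl | ⟨q, hq, rfl⟩)
        · exact mem_singleton q₀
        · exact hCq₀ q
      · rintro s (rfl | ⟨q, hq, rfl⟩)
        · exact isPreconnected_singleton
        · exact hCconn q
    have heq : ⋃₀ (insert {q₀} ((fun q : Q => C q) '' ↑t)) = (⋃ q ∈ t, C q) ∪ {q₀} := by
      rw [sUnion_insert, sUnion_image, union_comm, Finset.set_biUnion_coe]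
    rwa [heq] at key
  · intro q hq
    obtain ⟨i, hi⟩ := mem_iUnion.1 (ht hq)
    obtain ⟨hit, hqball⟩ := mem_iUnion.1 hi
    exact Or.inl (mem_biUnion hit (Or.inl (ball_subset_closedBall hqball)))
  · refine union_subset (iUnion₂_subset fun q _ => hCsub q) ?_
    simp only [singleton_subset_iff]
    exact hQω hq₀

lemma lintegral_finset_biUnion_le {α ι : Type*} [MeasurableSpace α] {μ : Measure α}
    (s : Finset ι) (f : α → ℝ≥0∞) (B : ι → Set α) :
    ∫⁻ x in ⋃ j ∈ s, B j, f x ∂μ ≤ ∑ j ∈ s, ∫⁻ x in B j, f x ∂μ := by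
  classical
  induction s using Finset.induction with
  | empty => simp
  | insert a s h ih =>
    rw [Finset.set_biUnion_insert, Finset.sum_insert h]
    exact le_trans (lintegral_union_le _ _ _) (add_le_add le_rfl ih)

/-- One step of an FF comparison. -/
lemma FF_step_bound {ω : Set Em} (hωo : IsOpen ω) {v : Em → Fn}
    (hv : DifferentiableOn ℝ v ω) (hvi : IntegrableOn v ω) {ρ : ℝ} (hρ : 0 < ρ)
    {x y : Em} (hx : ball x (4*ρ) ⊆ ω) (hxy : dist x y < ρ) :
    ENNReal.ofReal ‖FF v ρ y - FF v ρ x‖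
      ≤ (volume (ball (0:Em) ρ))⁻¹ * (ENNReal.ofReal ρ * ∫⁻ x in ω, gg v x) := by
  have hsafe : ∀ h ∈ ball (0:Em) ρ, ∀ t ∈ Icc (0:ℝ) 1, (x + h) + t • (y - x) ∈ ω := by
    intro h hh t ht
    refine hx ?_
    rw [mem_ball] at hh ⊢
    have e : (x + h) + t • (y - x) - x = h + t • (y - x) := by abel
    rw [dist_eq_norm, e]
    have h1 : ‖t • (y - x)‖ ≤ ‖y - x‖ := by
      rw [norm_smul, Real.norm_eq_abs]
      have := abs_le.2 ⟨by linarith [ht.1], ht.2⟩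
      nlinarith [norm_nonneg (y - x)]
    have h2 : ‖y - x‖ < ρ := by rwa [dist_comm, dist_eq_norm] at hxy
    have h3 : ‖h‖ < ρ := by simpa [dist_eq_norm] using hh
    calc ‖h + t • (y - x)‖ ≤ ‖h‖ + ‖t • (y - x)‖ := norm_add_le _ _
      _ < ρ + ρ := by linarith
      _ ≤ 4 * ρ := by linarith
  have h4 := FF_diff_bound hωo hv hvi hρ hsafe
  rw [norm_sub_rev] at h4
  refine le_trans h4 (mul_le_mul_left' (mul_le_mul_right' ?_ _) _)
  rw [← ofReal_norm_eq_coe_nnnorm]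
  refine ENNReal.ofReal_le_ofReal ?_
  rw [← dist_eq_norm]
  exact le_of_lt (by rwa [dist_comm])

/-- Chain comparison of FF values. -/
lemma FF_chain {ω : Set Em} (hωo : IsOpen ω) {v : Em → Fn}
    (hv : DifferentiableOn ℝ v ω) (hvi : IntegrableOn v ω) {ρ : ℝ} (hρ : 0 < ρ)
    {P : Set Em} (hsafe : ∀ x ∈ P, ball x (4*ρ) ⊆ ω)
    {n : ℕ} {c : ℕ → Em} (hcP : ∀ i, i ≤ n → c i ∈ P)
    (hstep : ∀ i, i < n → dist (c i) (c (i+1)) < ρ) :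
    ENNReal.ofReal ‖FF v ρ (c n) - FF v ρ (c 0)‖
      ≤ (n : ℝ≥0∞) * ((volume (ball (0:Em) ρ))⁻¹ * (ENNReal.ofReal ρ * ∫⁻ x in ω, gg v x)) := by
  induction n with
  | zero => simp
  | succ k ih =>
    have h1 : ENNReal.ofReal ‖FF v ρ (c (k+1)) - FF v ρ (c 0)‖
        ≤ ENNReal.ofReal ‖FF v ρ (c (k+1)) - FF v ρ (c k)‖
          + ENNReal.ofReal ‖FF v ρ (c k) - FF v ρ (c 0)‖ := by
      refine le_trans (ENNReal.ofReal_le_ofReal (norm_sub_le_norm_sub_add_norm_sub _ _ _))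
        (ENNReal.ofReal_add_le)
    have h2 := FF_step_bound hωo hv hvi hρ (hsafe _ (hcP k (by omega))) (hstep k (by omega))
    have h3 := ih (fun i hi => hcP i (by omega)) (fun i hi => hstep i (by omega))
    calc ENNReal.ofReal ‖FF v ρ (c (k+1)) - FF v ρ (c 0)‖
        ≤ _ + _ := h1
      _ ≤ (volume (ball (0:Em) ρ))⁻¹ * (ENNReal.ofReal ρ * ∫⁻ x in ω, gg v x)
          + (k : ℝ≥0∞) * ((volume (ball (0:Em) ρ))⁻¹ * (ENNReal.ofReal ρ * ∫⁻ x in ω, gg v x)) :=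
          add_le_add h2 h3
      _ = ((k : ℝ≥0∞) + 1) * ((volume (ball (0:Em) ρ))⁻¹ * (ENNReal.ofReal ρ * ∫⁻ x in ω, gg v x)) := by
          ring
      _ = ((k + 1 : ℕ) : ℝ≥0∞) * _ := by
          push_cast
          ring

/-- Geometry of boundary charts: vertical segments stay in ω and land in the target set. -/
lemma strip_move {ω : Set Em} {p u : Em} (hu : ‖u‖ = 1) {φ : Em → ℝ} {r : ℝ} (hr : 0 < r)
    (hchart : ∀ x ∈ ball p r, (x ∈ ω ↔ φ (x - ⟪x, u⟫ • u) < ⟪x, u⟫))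
    {x : Em} (hx : x ∈ ω) (hxb : x ∈ ball p (r/4)) :
    (∀ t ∈ Icc (0:ℝ) 1, x + t • ((r/4) • u) ∈ ω) ∧
    x + (r/4) • u ∈ closedBall p (r/2) ∧
    φ ((x + (r/4) • u) - ⟪x + (r/4) • u, u⟫ • u) + r/4 ≤ ⟪x + (r/4) • u, u⟫ := by
  have huu : ⟪u, u⟫ = (1:ℝ) := by
    rw [real_inner_self_eq_norm_sq, hu]; norm_num
  have hinner : ∀ c : ℝ, ⟪x + c • u, u⟫ = ⟪x, u⟫ + c := by
    intro c
    rw [inner_add_left, real_inner_smul_left, huu, mul_one]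
  have hproj : ∀ c : ℝ, (x + c • u) - ⟪x + c • u, u⟫ • u = x - ⟪x, u⟫ • u := by
    intro c
    rw [hinner c, add_smul]
    abel
  have hxr : x ∈ ball p r := ball_subset_ball (by linarith) hxb
  have hφx : φ (x - ⟪x, u⟫ • u) < ⟪x, u⟫ := (hchart x hxr).1 hx
  have hmem : ∀ t ∈ Icc (0:ℝ) 1, x + t • ((r/4) • u) ∈ ball p r := by
    intro t ht
    rw [mem_ball, dist_eq_norm] at hxb ⊢
    have e : x + t • ((r/4) • u) - p = (x - p) + (t * (r/4)) • u := by
      rw [smul_smul]; abel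
    rw [e]
    have h5 : ‖(t * (r/4)) • u‖ = t * (r/4) := by
      rw [norm_smul, Real.norm_eq_abs, hu, mul_one, abs_of_nonneg (by nlinarith [ht.1])]
    calc ‖(x - p) + (t * (r/4)) • u‖ ≤ ‖x - p‖ + ‖(t * (r/4)) • u‖ := norm_add_le _ _
      _ = ‖x - p‖ + t * (r/4) := by rw [h5]
      _ < r/4 + r/4 := by
          have : t * (r/4) ≤ 1 * (r/4) := by nlinarith [ht.1, ht.2]
          nlinarith
      _ ≤ r := by linarith
  refine ⟨?_, ?_, ?_⟩
  · intro t ht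
    refine (hchart _ (hmem t ht)).2 ?_
    rw [smul_smul, hproj, hinner]
    have : (0:ℝ) ≤ t * (r/4) := by nlinarith [ht.1]
    linarith
  · rw [mem_closedBall, dist_eq_norm]
    have e : x + (r/4) • u - p = (x - p) + (r/4) • u := by abel
    rw [e]
    have h5 : ‖(r/4 : ℝ) • u‖ = r/4 := by
      rw [norm_smul, Real.norm_eq_abs, hu, mul_one, abs_of_nonneg (by linarith)]
    rw [mem_ball, dist_eq_norm] at hxb
    calc ‖(x - p) + (r/4) • u‖ ≤ ‖x - p‖ + r/4 := by
          refine le_trans (norm_add_le _ _) ?_; rw [h5]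
      _ ≤ r/2 := by linarith
  · rw [hproj, hinner]
    linarith


/-- Master geometric L¹ bound. -/
lemma master {ω : Set Em} (hωo : IsOpen ω) (hωc : IsConnected ω)
    (hωb : Bornology.IsBounded ω) (hωl : LipschitzBoundary ω) :
    ∃ (x₀ : Em) (ρ : ℝ) (C₁ C₂ : ℝ≥0∞), 0 < ρ ∧ C₁ ≠ ⊤ ∧ C₂ ≠ ⊤ ∧ ball x₀ (4*ρ) ⊆ ω ∧
      ∀ v : Em → Fn, DifferentiableOn ℝ v ω → Measurable v → IntegrableOn v ω →
        ∫⁻ x in ω, (‖v x‖₊ : ℝ≥0∞) ≤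
          C₁ * (∫⁻ x in ω, gg v x) + C₂ * ENNReal.ofReal ‖FF v ρ x₀‖ := by
  classical
  obtain ⟨x₀, hx₀⟩ := hωc.nonempty
  have hclc : IsCompact (closure ω) := hωb.isCompact_closure
  have hfc : IsCompact (frontier ω) :=
    hclc.of_isClosed_subset isClosed_frontier frontier_subset_closure
  choose! u hu φ K r hr hφ hch using hωl
  obtain ⟨t, ht⟩ := hfc.elim_finite_subcover (fun q : frontier ω => ball (q : Em) (r q / 4))
    (fun _ => isOpen_ball)
    (fun p hp => mem_iUnion.2 ⟨⟨p, hp⟩, mem_ball_self (by have := hr p hp; linarith)⟩)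
  set Kc := ω \ ⋃ i ∈ t, ball (i : Em) (r i / 4) with hKc
  have hKccl : closure Kc ⊆ ω := by
    intro q hq
    have h1 : q ∈ closure ω := closure_mono diff_subset hq
    by_contra hqω
    have hqf : q ∈ frontier ω := by
      rw [hωo.frontier_eq]; exact ⟨h1, hqω⟩
    obtain ⟨i, hi⟩ := mem_iUnion.1 (ht hqf)
    obtain ⟨hit, hqball⟩ := mem_iUnion.1 hi
    obtain ⟨y, hy1, hy2⟩ := _root_.mem_closure_iff.1 hq _ isOpen_ball hqball
    exact hy2.2 (mem_biUnion hit hy1)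
  set T : frontier ω → Set Em := fun i =>
    closedBall (i : Em) (r i / 2) ∩
      {x | φ i (x - ⟪x, u i⟫ • u i) + r i / 4 ≤ ⟪x, u i⟫} with hT
  have hTcomp : ∀ i : frontier ω, IsCompact (T i) := by
    intro i
    have hc1 : Continuous fun x : Em => φ i (x - ⟪x, u i⟫ • u i) + r i / 4 := by
      refine Continuous.add ?_ continuous_const
      refine (hφ i i.2).continuous.comp ?_
      exact continuous_id.sub ((continuous_id.inner continuous_const :
        Continuous fun x : Em => ⟪x, u i⟫).smul continuous_const)
    have hc2 : Continuous fun x : Em => (⟪x, u i⟫ : ℝ) := continuous_id.inner continuous_const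
    exact (isCompact_closedBall _ _).inter_right (isClosed_le hc1 hc2)
  have hTsub : ∀ i : frontier ω, T i ⊆ ω := by
    intro i x hx
    have hxb : x ∈ ball (i : Em) (r i) :=
      lt_of_le_of_lt (mem_closedBall.1 hx.1) (by have := hr i i.2; linarith)
    refine (hch i i.2 x hxb).2 ?_
    have := hx.2
    have hri := hr i i.2
    simp only [mem_setOf_eq] at this
    linarith
  set Q : Set Em := (closure Kc ∪ ⋃ i ∈ t, T i) ∪ {x₀} with hQ
  have hQcomp : IsCompact Q := by
    refine IsCompact.union (IsCompact.union ?_ (t.isCompact_biUnion fun i _ => hTcomp i))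
      isCompact_singleton
    exact hclc.of_isClosed_subset isClosed_closure (closure_mono diff_subset)
  have hQω : Q ⊆ ω := by
    refine union_subset (union_subset hKccl (iUnion₂_subset fun i _ => hTsub i)) ?_
    simpa using hx₀
  have hx₀Q : x₀ ∈ Q := Or.inr rfl
  obtain ⟨P, hPc, hPconn, hQP, hPω, hx₀P⟩ :=
    exists_connected_compact_superset hωo hωc hQcomp hQω hx₀Q
  obtain ⟨δ, hδ, hδsub⟩ := hPc.exists_cthickening_subset_open hωo hPω
  set ρ := δ / 8 with hρdef
  have hρ : 0 < ρ := by positivity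
  have hPsafe : ∀ x ∈ P, ball x (4 * ρ) ⊆ ω := by
    intro x hx
    refine subset_trans ?_ (subset_trans (thickening_subset_cthickening δ P) hδsub)
    intro y hy
    rw [mem_thickening_iff]
    exact ⟨x, hx, lt_of_lt_of_le (mem_ball.1 hy) (by rw [hρdef]; linarith)⟩
  obtain ⟨sf, hsf⟩ := hPc.elim_finite_subcover (fun q : P => ball (q : Em) ρ)
    (fun _ => isOpen_ball) (fun q hq => mem_iUnion.2 ⟨⟨q, hq⟩, mem_ball_self hρ⟩)
  have hch2 : ∀ j : P, ∃ (n : ℕ) (c : ℕ → Em), c 0 = x₀ ∧ c n = (j : Em) ∧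
      (∀ i, i ≤ n → c i ∈ P) ∧ ∀ i, i < n → dist (c i) (c (i+1)) < ρ :=
    fun j => chain_exists hPconn hρ hx₀P j.2
  choose nn cseq hc0 hcn hcP hcstep using hch2
  set μB := volume (ball (0:Em) ρ) with hμBdef
  have hμB0 : μB ≠ 0 := (measure_ball_pos volume _ hρ).ne'
  have hμBt : μB ≠ ⊤ := measure_ball_lt_top.ne
  clear_value ρ μB
  refine ⟨x₀, ρ,
    (∑ i ∈ t, ENNReal.ofReal (r i / 4))
      + ((t.card : ℝ≥0∞) + 1) * ((∑ j ∈ sf, ((2:ℝ≥0∞) + (nn j : ℝ≥0∞))) * ENNReal.ofReal ρ),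
    ((t.card : ℝ≥0∞) + 1) * ((sf.card : ℝ≥0∞) * μB),
    hρ, ?_, ?_, hPsafe x₀ hx₀P, ?_⟩
  · refine ENNReal.add_ne_top.2 ⟨?_, ?_⟩
    · exact (ENNReal.sum_lt_top.2 fun i _ => ENNReal.ofReal_lt_top).ne
    · refine ENNReal.mul_ne_top (ENNReal.add_ne_top.2 ⟨ENNReal.natCast_ne_top _, by simp⟩)
        (ENNReal.mul_ne_top ?_ ENNReal.ofReal_ne_top)
      exact (ENNReal.sum_lt_top.2 fun j _ => by
        exact ENNReal.add_lt_top.2 ⟨by simp, ENNReal.natCast_lt_top _⟩).ne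
  · exact ENNReal.mul_ne_top (ENNReal.add_ne_top.2 ⟨ENNReal.natCast_ne_top _, by simp⟩)
      (ENNReal.mul_ne_top (ENNReal.natCast_ne_top _) hμBt)
  intro v hv hvm hvi
  set G := ∫⁻ x in ω, gg v x with hG
  set D := ENNReal.ofReal ρ * G with hD
  set W₀ := ENNReal.ofReal ‖FF v ρ x₀‖ with hW₀
  set B' := μB⁻¹ * D with hB'
  clear_value G D W₀ B'
  have hMBB : μB * B' = D := by
    rw [hB', ← mul_assoc, ENNReal.mul_inv_cancel hμB0 hμBt, one_mul]
  -- per ball bound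
  have hPB : ∀ j : P, ∫⁻ w in ball (j : Em) ρ, (‖v w‖₊ : ℝ≥0∞)
      ≤ ((2:ℝ≥0∞) + (nn j : ℝ≥0∞)) * D + μB * W₀ := by
    intro j
    have hjP : (j : Em) ∈ P := j.2
    have hsafej : ball (j : Em) (4*ρ) ⊆ ω := hPsafe _ hjP
    have hFFxj : ENNReal.ofReal ‖FF v ρ (j : Em)‖ ≤ W₀ + (nn j : ℝ≥0∞) * B' := by
      have h1 := FF_chain hωo hv hvi hρ hPsafe (hcP j) (hcstep j)
      rw [hcn j, hc0 j, ← hμBdef, ← hG, ← hD, ← hB'] at h1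
      have h2 : ‖FF v ρ (j : Em)‖ ≤ ‖FF v ρ x₀‖ + ‖FF v ρ (j : Em) - FF v ρ x₀‖ := by
        have h3 := norm_add_le (FF v ρ x₀) (FF v ρ (j : Em) - FF v ρ x₀)
        have h4 : FF v ρ x₀ + (FF v ρ (j : Em) - FF v ρ x₀) = FF v ρ (j : Em) := by abel
        rwa [h4] at h3
      calc ENNReal.ofReal ‖FF v ρ (j : Em)‖
          ≤ ENNReal.ofReal (‖FF v ρ x₀‖ + ‖FF v ρ (j : Em) - FF v ρ x₀‖) :=
            ENNReal.ofReal_le_ofReal h2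
        _ ≤ W₀ + ENNReal.ofReal ‖FF v ρ (j : Em) - FF v ρ x₀‖ := by
            rw [hW₀]; exact ENNReal.ofReal_add_le
        _ ≤ W₀ + (nn j : ℝ≥0∞) * B' := add_le_add le_rfl h1
    have hFFw : ∀ w ∈ ball (j : Em) ρ, ENNReal.ofReal ‖FF v ρ w - FF v ρ (j : Em)‖ ≤ B' := by
      intro w hw
      have h := FF_step_bound hωo hv hvi hρ hsafej (by rw [dist_comm]; exact mem_ball.1 hw)
      rwa [← hμBdef, ← hG, ← hD, ← hB'] at h
    have hdev : ∫⁻ w in ball (j : Em) ρ, ENNReal.ofReal ‖v w - FF v ρ w‖ ≤ D := by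
      rw [hD, hG]
      refine dev_lintegral_bound hωo hv hvm hvi hρ fun w hw => ?_
      intro y hy
      refine hsafej ?_
      rw [mem_ball] at hy hw ⊢
      calc dist y (j : Em) ≤ dist y w + dist w (j : Em) := dist_triangle _ _ _
        _ < ρ + ρ := by linarith
        _ ≤ 4 * ρ := by linarith
    have hpt : ∀ w ∈ ball (j : Em) ρ, (‖v w‖₊ : ℝ≥0∞)
        ≤ ENNReal.ofReal ‖v w - FF v ρ w‖ + (B' + (W₀ + (nn j : ℝ≥0∞) * B')) := by
      intro w hw
      have t1 : ‖v w‖ ≤ ‖v w - FF v ρ w‖ + ‖FF v ρ w - FF v ρ (j : Em)‖ + ‖FF v ρ (j : Em)‖ := by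
        have h4 : (v w - FF v ρ w) + (FF v ρ w - FF v ρ (j : Em)) + FF v ρ (j : Em) = v w := by
          abel
        calc ‖v w‖ = ‖(v w - FF v ρ w) + (FF v ρ w - FF v ρ (j : Em)) + FF v ρ (j : Em)‖ := by
              rw [h4]
          _ ≤ _ := norm_add₃_le
      calc (‖v w‖₊ : ℝ≥0∞) = ENNReal.ofReal ‖v w‖ := (ofReal_norm_eq_coe_nnnorm _).symm
        _ ≤ ENNReal.ofReal (‖v w - FF v ρ w‖ + ‖FF v ρ w - FF v ρ (j : Em)‖
              + ‖FF v ρ (j : Em)‖) := ENNReal.ofReal_le_ofReal t1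
        _ ≤ ENNReal.ofReal (‖v w - FF v ρ w‖ + ‖FF v ρ w - FF v ρ (j : Em)‖)
              + ENNReal.ofReal ‖FF v ρ (j : Em)‖ := ENNReal.ofReal_add_le
        _ ≤ (ENNReal.ofReal ‖v w - FF v ρ w‖ + ENNReal.ofReal ‖FF v ρ w - FF v ρ (j : Em)‖)
              + ENNReal.ofReal ‖FF v ρ (j : Em)‖ := add_le_add ENNReal.ofReal_add_le le_rfl
        _ ≤ (ENNReal.ofReal ‖v w - FF v ρ w‖ + B') + (W₀ + (nn j : ℝ≥0∞) * B') :=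
              add_le_add (add_le_add le_rfl (hFFw w hw)) hFFxj
        _ = ENNReal.ofReal ‖v w - FF v ρ w‖ + (B' + (W₀ + (nn j : ℝ≥0∞) * B')) := by ring
    calc ∫⁻ w in ball (j : Em) ρ, (‖v w‖₊ : ℝ≥0∞)
        ≤ ∫⁻ w in ball (j : Em) ρ,
            (ENNReal.ofReal ‖v w - FF v ρ w‖ + (B' + (W₀ + (nn j : ℝ≥0∞) * B'))) :=
          lintegral_mono_ae ((ae_restrict_iff' measurableSet_ball).2 (ae_of_all _ hpt))
      _ = (∫⁻ w in ball (j : Em) ρ, ENNReal.ofReal ‖v w - FF v ρ w‖)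
            + (B' + (W₀ + (nn j : ℝ≥0∞) * B')) * μB := by
          rw [lintegral_add_right _ measurable_const, setLIntegral_const, vol_ball_eq,
            ← hμBdef]
      _ ≤ D + (B' + (W₀ + (nn j : ℝ≥0∞) * B')) * μB := add_le_add hdev le_rfl
      _ = ((2:ℝ≥0∞) + (nn j : ℝ≥0∞)) * D + μB * W₀ := by
          rw [← hMBB]; ring
  -- sum over balls
  set SB := (∑ j ∈ sf, ((2:ℝ≥0∞) + (nn j : ℝ≥0∞))) * D + (sf.card : ℝ≥0∞) * (μB * W₀) with hSB
  have hsumB : ∫⁻ x in ⋃ j ∈ sf, ball (j : Em) ρ, (‖v x‖₊ : ℝ≥0∞) ≤ SB := by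
    refine le_trans (lintegral_finset_biUnion_le sf _ _) ?_
    refine le_trans (Finset.sum_le_sum fun j _ => hPB j) (le_of_eq ?_)
    rw [hSB, Finset.sum_add_distrib, ← Finset.sum_mul, Finset.sum_const, nsmul_eq_mul]
  have hsubP : ∀ X : Set Em, X ⊆ P → ∫⁻ x in X, (‖v x‖₊ : ℝ≥0∞) ≤ SB :=
    fun X hX => le_trans (lintegral_mono_set (hX.trans hsf)) hsumB
  -- strips
  have hstrip : ∀ i : frontier ω, i ∈ t →
      ∫⁻ x in ω ∩ ball (i : Em) (r i / 4), (‖v x‖₊ : ℝ≥0∞)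
        ≤ ENNReal.ofReal (r i / 4) * G + SB := by
    intro i hi
    set b : Em := ((r i / 4) : ℝ) • u i with hb
    have hmove := fun x (hx : x ∈ ω ∩ ball (i : Em) (r i / 4)) =>
      strip_move (hu i i.2) (hr i i.2) (hch i i.2) hx.1 hx.2
    have hbn : (‖b‖₊ : ℝ≥0∞) = ENNReal.ofReal (r i / 4) := by
      rw [← ofReal_norm_eq_coe_nnnorm, hb, norm_smul, Real.norm_eq_abs, hu i i.2, mul_one,
        abs_of_nonneg (by have := hr i i.2; linarith)]
    have himg : (fun x => x + b) '' (ω ∩ ball (i : Em) (r i / 4)) ⊆ P := by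
      rintro _ ⟨x, hx, rfl⟩
      refine hQP (Or.inl (Or.inr (mem_biUnion hi ?_)))
      have e : x + b = x + (r i / 4) • u i := rfl
      exact ⟨(hmove x hx).2.1, (hmove x hx).2.2⟩
    calc ∫⁻ x in ω ∩ ball (i : Em) (r i / 4), (‖v x‖₊ : ℝ≥0∞)
        ≤ ∫⁻ x in ω ∩ ball (i : Em) (r i / 4),
            ((‖v (x + b) - v x‖₊ : ℝ≥0∞) + (‖v (x + b)‖₊ : ℝ≥0∞)) := by
          refine lintegral_mono_ae ((ae_restrict_iff'
            (hωo.measurableSet.inter measurableSet_ball)).2 (ae_of_all _ fun x hx => ?_))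
          have t1 : ‖v x‖ ≤ ‖v (x + b) - v x‖ + ‖v (x + b)‖ := by
            have h4 : ‖v (x + b) - (v (x + b) - v x)‖ ≤ ‖v (x + b)‖ + ‖v (x + b) - v x‖ :=
              norm_sub_le _ _
            have h5 : v (x + b) - (v (x + b) - v x) = v x := by abel
            rw [h5] at h4
            linarith
          calc (‖v x‖₊ : ℝ≥0∞) = ENNReal.ofReal ‖v x‖ := (ofReal_norm_eq_coe_nnnorm _).symm
            _ ≤ ENNReal.ofReal (‖v (x + b) - v x‖ + ‖v (x + b)‖) := ENNReal.ofReal_le_ofReal t1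
            _ ≤ _ := by
                refine le_trans ENNReal.ofReal_add_le ?_
                rw [ofReal_norm_eq_coe_nnnorm, ofReal_norm_eq_coe_nnnorm]
      _ = (∫⁻ x in ω ∩ ball (i : Em) (r i / 4), (‖v (x + b) - v x‖₊ : ℝ≥0∞))
            + ∫⁻ x in ω ∩ ball (i : Em) (r i / 4), (‖v (x + b)‖₊ : ℝ≥0∞) := by
          rw [lintegral_add_right]
          exact (hvm.comp (measurable_id.add_const b)).nnnorm.coe_nnreal_ennreal
      _ ≤ ‖b‖₊ * G + SB := by
          refine add_le_add ?_ ?_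
          · have h := translate_lintegral_bound hωo hv
              (fun w hw s hs => (hmove w hw).1 s hs) (b := b)
            rwa [← hG] at h
          · rw [shift_setLIntegral (fun y => (‖v y‖₊ : ℝ≥0∞)) _ b]
            exact hsubP _ himg
      _ = ENNReal.ofReal (r i / 4) * G + SB := by rw [hbn]
  -- total
  have hcover : ω ⊆ (⋃ i ∈ t, ω ∩ ball (i : Em) (r i / 4)) ∪ Kc := by
    intro x hx
    by_cases h : x ∈ ⋃ i ∈ t, ball (i : Em) (r i / 4)
    · obtain ⟨i, hi⟩ := mem_iUnion.1 h
      obtain ⟨hit, hxb⟩ := mem_iUnion.1 hi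
      exact Or.inl (mem_biUnion hit ⟨hx, hxb⟩)
    · exact Or.inr ⟨hx, h⟩
  calc ∫⁻ x in ω, (‖v x‖₊ : ℝ≥0∞)
      ≤ ∫⁻ x in (⋃ i ∈ t, ω ∩ ball (i : Em) (r i / 4)) ∪ Kc, (‖v x‖₊ : ℝ≥0∞) :=
        lintegral_mono_set hcover
    _ ≤ (∑ i ∈ t, ∫⁻ x in ω ∩ ball (i : Em) (r i / 4), (‖v x‖₊ : ℝ≥0∞))
          + ∫⁻ x in Kc, (‖v x‖₊ : ℝ≥0∞) := by
        refine le_trans (lintegral_union_le _ _ _) (add_le_add ?_ le_rfl)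
        exact lintegral_finset_biUnion_le t _ _
    _ ≤ (∑ i ∈ t, (ENNReal.ofReal (r i / 4) * G + SB)) + SB := by
        refine add_le_add (Finset.sum_le_sum fun i hi => hstrip i hi) ?_
        refine hsubP Kc ?_
        exact subset_closure.trans (subset_union_left.trans (subset_union_left.trans hQP))
    _ = (∑ i ∈ t, ENNReal.ofReal (r i / 4)) * G + ((t.card : ℝ≥0∞) + 1) * SB := by
        rw [Finset.sum_add_distrib, ← Finset.sum_mul, Finset.sum_const, nsmul_eq_mul]
        ring
    _ = _ := by
        rw [hSB, hD]
        try rw [← hG]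
        try rw [← hW₀]
        ring

end Statement8

open Statement8 in
/-- The averaged potential satisfies `liminf_{|z|→∞} V(z) > 0`. -/
theorem Vavg_liminf_pos {m N : ℕ} (ω : Set (EuclideanSpace ℝ (Fin m)))
    (hωo : IsOpen ω) (hωc : IsConnected ω) (hωb : Bornology.IsBounded ω)
    (hωl : LipschitzBoundary ω)
    (W : EuclideanSpace ℝ (Fin N) → ℝ≥0∞) (hlsc : LowerSemicontinuous W)
    (hH2 : ∃ c : ℝ≥0∞, 0 < c ∧ ∃ R : ℝ, ∀ z : EuclideanSpace ℝ (Fin N), R ≤ ‖z‖ → c ≤ W z) :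
    ∃ c : ℝ≥0∞, 0 < c ∧ ∃ R : ℝ,
      ∀ z : EuclideanSpace ℝ (Fin N), R ≤ ‖z‖ → c ≤ Vavg W ω z := by
  classical
  obtain ⟨c₀, hc₀, R₀', hH⟩ := hH2
  have hc₀'pos : 0 < min c₀ 1 := lt_min hc₀ zero_lt_one
  have hc₀'top : min c₀ 1 ≠ ⊤ := ((min_le_right _ _).trans_lt ENNReal.one_lt_top).ne
  have hW : ∀ z : EuclideanSpace ℝ (Fin N), max R₀' 0 ≤ ‖z‖ → min c₀ 1 ≤ W z :=
    fun z hz => (min_le_left _ _).trans (hH z ((le_max_left _ _).trans hz))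
  obtain ⟨x₀, ρ, C₁, C₂, hρ, hC₁, hC₂, hb₀, hmaster⟩ := master (N := N) hωo hωc hωb hωl
  have hμω0 : volume ω ≠ 0 := (hωo.measure_pos volume hωc.nonempty).ne'
  have hμωt : volume ω ≠ ⊤ := hωb.measure_lt_top.ne
  have hB₀ω : ball x₀ ρ ⊆ ω := (ball_subset_ball (by linarith)).trans hb₀
  have hμB₀0 : volume (ball x₀ ρ) ≠ 0 := (measure_ball_pos volume _ hρ).ne'
  have hμB₀t : volume (ball x₀ ρ) ≠ ⊤ := measure_ball_lt_top.ne
  have hμB0 : volume (ball (0 : EuclideanSpace ℝ (Fin m)) ρ) ≠ 0 := (measure_ball_pos volume _ hρ).ne'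
  have hμBt : volume (ball (0 : EuclideanSpace ℝ (Fin m)) ρ) ≠ ⊤ := measure_ball_lt_top.ne
  have hhalf0 : volume (ball x₀ ρ) / 2 ≠ 0 := by
    rw [Ne, ENNReal.div_eq_zero_iff]
    push_neg
    exact ⟨hμB₀0, by norm_num⟩
  have hhalft : volume (ball x₀ ρ) / 2 ≠ ⊤ :=
    (ENNReal.div_lt_top hμB₀t (by norm_num)).ne
  set ε := min c₀ 1 * ((volume (ball x₀ ρ) / 2) / volume ω) with hε
  have hεpos : 0 < ε := by
    rw [hε, pos_iff_ne_zero]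
    refine mul_ne_zero hc₀'pos.ne' ?_
    rw [Ne, ENNReal.div_eq_zero_iff]
    push_neg
    exact ⟨hhalf0, hμωt⟩
  have hεtop : ε ≠ ⊤ := by
    rw [hε]
    exact ENNReal.mul_ne_top hc₀'top (ENNReal.div_lt_top hhalft hμω0).ne
  -- anchor constant and Z
  set CA := ((volume (ball (0 : EuclideanSpace ℝ (Fin m)) ρ))⁻¹ + (volume (ball x₀ ρ) / 2)⁻¹) * ENNReal.ofReal ρ
    with hCA
  have hCAtop : CA ≠ ⊤ := by
    rw [hCA]
    exact ENNReal.mul_ne_top (ENNReal.add_ne_top.2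
      ⟨ENNReal.inv_ne_top.2 hμB0, ENNReal.inv_ne_top.2 hhalf0⟩) ENNReal.ofReal_ne_top
  set Gbd := (ε * volume ω) ^ (1/2 : ℝ) * (volume ω) ^ (1/2 : ℝ) with hGbd
  have hGbdtop : Gbd ≠ ⊤ := by
    rw [hGbd]
    exact ENNReal.mul_ne_top
      (ENNReal.rpow_ne_top_of_nonneg (by norm_num) (ENNReal.mul_ne_top hεtop hμωt))
      (ENNReal.rpow_ne_top_of_nonneg (by norm_num) hμωt)
  set Z := (volume ω)⁻¹ * ((C₁ + C₂ * CA) * Gbd + C₂ * ENNReal.ofReal (max R₀' 0)) with hZ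
  have hZtop : Z ≠ ⊤ := by
    rw [hZ]
    refine ENNReal.mul_ne_top (ENNReal.inv_ne_top.2 hμω0) (ENNReal.add_ne_top.2 ⟨?_, ?_⟩)
    · exact ENNReal.mul_ne_top (ENNReal.add_ne_top.2 ⟨hC₁, ENNReal.mul_ne_top hC₂ hCAtop⟩)
        hGbdtop
    · exact ENNReal.mul_ne_top hC₂ ENNReal.ofReal_ne_top
  refine ⟨ε, hεpos, Z.toReal + 1, fun z hz => ?_⟩
  simp only [Vavg]
  refine le_iInf₂ fun v hv => ?_
  simp only [mem_setOf_eq] at hv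
  obtain ⟨⟨hdiff, hint, _⟩, havg⟩ := hv
  rw [eAvg]
  by_cases hI : ε * volume ω ≤ ∫⁻ x in ω, ((‖fderivWithin ℝ v ω x‖₊ : ℝ≥0∞) ^ 2 + W (v x))
  · refine le_trans (le_of_eq ?_) (mul_le_mul_left' hI _)
    rw [mul_comm ε, ← mul_assoc, ENNReal.inv_mul_cancel hμω0 hμωt, one_mul]
  push_neg at hI
  exfalso
  -- measurable extension
  set vt := ω.piecewise v 0 with hvtdef
  have hvteq : ∀ x ∈ ω, vt x = v x := fun x hx => piecewise_eq_of_mem _ _ _ hx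
  have hvtdiff : DifferentiableOn ℝ vt ω := hdiff.congr hvteq
  have hvtm : Measurable vt := measurable_piecewise_ext hωo hdiff.continuousOn
  have hvti : IntegrableOn vt ω := hint.congr_fun (fun x hx => (hvteq x hx).symm)
    hωo.measurableSet
  have hgg : ∀ x ∈ ω, gg vt x = (‖fderivWithin ℝ v ω x‖₊ : ℝ≥0∞) := by
    intro x hx
    have h1 : fderiv ℝ vt x = fderiv ℝ v x :=
      Filter.EventuallyEq.fderiv_eq (eventuallyEq_of_mem (hωo.mem_nhds hx) hvteq)
    rw [gg, h1, fderivWithin_of_isOpen hωo hx]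
  obtain ⟨G, hG⟩ : ∃ g, g = ∫⁻ x in ω, gg vt x := ⟨_, rfl⟩
  -- energy bounds
  have hEb : ∫⁻ x in ω, (gg vt x) ^ (2:ℝ) ≤ ε * volume ω := by
    have he : ∫⁻ x in ω, (gg vt x) ^ (2:ℝ)
        = ∫⁻ x in ω, (‖fderivWithin ℝ v ω x‖₊ : ℝ≥0∞) ^ 2 := by
      refine setLIntegral_congr_fun hωo.measurableSet (fun x hx => ?_)
      rw [hgg x hx, show (2:ℝ) = ((2:ℕ):ℝ) by norm_num, ENNReal.rpow_natCast]
    rw [he]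
    exact le_trans (lintegral_mono fun x => le_self_add) hI.le
  have hFb : ∫⁻ x in ω, W (v x) ≤ ε * volume ω :=
    le_trans (lintegral_mono fun x => self_le_add_left _ _) hI.le
  -- Hölder
  have hGb : G ≤ Gbd := by
    have hpq : Real.HolderConjugate 2 2 := Real.HolderConjugate.two_two
    have hH := ENNReal.lintegral_mul_le_Lp_mul_Lq (volume.restrict ω) hpq
      (gg_meas vt).aemeasurable aemeasurable_const (g := fun _ => (1:ℝ≥0∞))
    simp only [Pi.mul_apply, mul_one, ENNReal.one_rpow, setLIntegral_one] at hH
    rw [hG, hGbd]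
    calc ∫⁻ x in ω, gg vt x
        ≤ (∫⁻ x in ω, gg vt x ^ (2:ℝ)) ^ (1/2 : ℝ) * (volume ω) ^ (1/2 : ℝ) := by
          simpa using hH
      _ ≤ (ε * volume ω) ^ (1/2 : ℝ) * (volume ω) ^ (1/2 : ℝ) :=
          mul_le_mul_right' (ENNReal.rpow_le_rpow hEb (by norm_num)) _
  -- Chebyshev
  have hAbadm : MeasurableSet (ω ∩ {x | max R₀' 0 ≤ ‖vt x‖}) :=
    hωo.measurableSet.inter (measurableSet_le measurable_const hvtm.norm)
  have hcheb : min c₀ 1 * volume (ω ∩ {x | max R₀' 0 ≤ ‖vt x‖}) ≤ ∫⁻ x in ω, W (v x) := by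
    calc min c₀ 1 * volume (ω ∩ {x | max R₀' 0 ≤ ‖vt x‖})
        = ∫⁻ _ in ω ∩ {x | max R₀' 0 ≤ ‖vt x‖}, min c₀ 1 := (setLIntegral_const _ _).symm
      _ ≤ ∫⁻ x in ω ∩ {x | max R₀' 0 ≤ ‖vt x‖}, W (vt x) :=
          setLIntegral_mono (hlsc.measurable.comp hvtm) fun x hx => hW (vt x) hx.2
      _ = ∫⁻ x in ω ∩ {x | max R₀' 0 ≤ ‖vt x‖}, W (v x) :=
          setLIntegral_congr_fun hAbadm (fun x hx => by rw [hvteq x hx.1])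
      _ ≤ ∫⁻ x in ω, W (v x) := lintegral_mono_set fun x hx => hx.1
  have hAbadμ : volume (ω ∩ {x | max R₀' 0 ≤ ‖vt x‖}) ≤ volume (ball x₀ ρ) / 2 := by
    have he2 : ε * volume ω = min c₀ 1 * (volume (ball x₀ ρ) / 2) := by
      rw [hε, mul_assoc, ENNReal.div_mul_cancel hμω0 hμωt]
    have h3 := (hcheb.trans hFb)
    rw [he2] at h3
    exact (ENNReal.mul_le_mul_iff_right hc₀'pos.ne' hc₀'top).1 h3
  -- good set
  have hAgμ : volume (ball x₀ ρ) / 2 ≤ volume (ball x₀ ρ \ (ω ∩ {x | max R₀' 0 ≤ ‖vt x‖})) := by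
    have h1 : volume (ball x₀ ρ)
        ≤ volume (ball x₀ ρ \ (ω ∩ {x | max R₀' 0 ≤ ‖vt x‖})) + volume (ball x₀ ρ) / 2 := by
      calc volume (ball x₀ ρ)
          ≤ volume ((ball x₀ ρ \ (ω ∩ {x | max R₀' 0 ≤ ‖vt x‖}))
              ∪ (ω ∩ {x | max R₀' 0 ≤ ‖vt x‖})) := by
            refine measure_mono fun x hx => ?_
            by_cases h : x ∈ ω ∩ {x | max R₀' 0 ≤ ‖vt x‖}
            · exact Or.inr h
            · exact Or.inl ⟨hx, h⟩
        _ ≤ _ + volume (ω ∩ {x | max R₀' 0 ≤ ‖vt x‖}) := measure_union_le _ _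
        _ ≤ _ + volume (ball x₀ ρ) / 2 := add_le_add le_rfl hAbadμ
    have h2 := tsub_le_iff_right.2 h1
    rwa [ENNReal.sub_half hμB₀t] at h2
  -- anchor
  have hanchor : ENNReal.ofReal ‖FF vt ρ x₀‖
      ≤ ENNReal.ofReal (max R₀' 0) + CA * G := by
    have hsafe2 : ∀ w ∈ ball x₀ ρ, ball w ρ ⊆ ω := by
      intro w hw y hy
      refine hb₀ ?_
      rw [mem_ball] at hw hy ⊢
      calc dist y x₀ ≤ dist y w + dist w x₀ := dist_triangle _ _ _
        _ < ρ + ρ := by linarith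
        _ ≤ 4 * ρ := by linarith
    have hptA : ∀ x ∈ ball x₀ ρ \ (ω ∩ {x | max R₀' 0 ≤ ‖vt x‖}),
        ENNReal.ofReal ‖FF vt ρ x₀‖ ≤ ENNReal.ofReal ‖vt x - FF vt ρ x‖
          + (ENNReal.ofReal (max R₀' 0)
            + (volume (ball (0 : EuclideanSpace ℝ (Fin m)) ρ))⁻¹ * (ENNReal.ofReal ρ * G)) := by
      intro x hx
      have hx1 : x ∈ ball x₀ ρ := hx.1
      have hxω : x ∈ ω := hB₀ω hx1
      have hvx : ‖vt x‖ ≤ max R₀' 0 := by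
        by_contra h
        exact hx.2 ⟨hxω, le_of_lt (not_le.1 h)⟩
      have hstep : ENNReal.ofReal ‖FF vt ρ x - FF vt ρ x₀‖
          ≤ (volume (ball (0 : EuclideanSpace ℝ (Fin m)) ρ))⁻¹ * (ENNReal.ofReal ρ * G) := by
        rw [hG]
        exact FF_step_bound hωo hvtdiff hvti hρ hb₀ (by rw [dist_comm]; exact mem_ball.1 hx1)
      have t1 : ‖FF vt ρ x₀‖ ≤ ‖vt x - FF vt ρ x‖ + (‖vt x‖ + ‖FF vt ρ x - FF vt ρ x₀‖) := by
        have e : FF vt ρ x₀ = vt x - (vt x - FF vt ρ x) - (FF vt ρ x - FF vt ρ x₀) := by abel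
        nth_rewrite 1 [e]
        have h4 : ‖vt x - (vt x - FF vt ρ x) - (FF vt ρ x - FF vt ρ x₀)‖
            ≤ ‖vt x - (vt x - FF vt ρ x)‖ + ‖FF vt ρ x - FF vt ρ x₀‖ := norm_sub_le _ _
        have h5 : ‖vt x - (vt x - FF vt ρ x)‖ ≤ ‖vt x‖ + ‖vt x - FF vt ρ x‖ := norm_sub_le _ _
        linarith
      calc ENNReal.ofReal ‖FF vt ρ x₀‖
          ≤ ENNReal.ofReal (‖vt x - FF vt ρ x‖ + (‖vt x‖ + ‖FF vt ρ x - FF vt ρ x₀‖)) :=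
            ENNReal.ofReal_le_ofReal t1
        _ ≤ ENNReal.ofReal ‖vt x - FF vt ρ x‖
              + (ENNReal.ofReal ‖vt x‖ + ENNReal.ofReal ‖FF vt ρ x - FF vt ρ x₀‖) :=
            le_trans ENNReal.ofReal_add_le (add_le_add le_rfl ENNReal.ofReal_add_le)
        _ ≤ _ := add_le_add le_rfl (add_le_add (ENNReal.ofReal_le_ofReal hvx) hstep)
    -- integrate over the good set
    have hdev2 : ∫⁻ x in ball x₀ ρ \ (ω ∩ {x | max R₀' 0 ≤ ‖vt x‖}),
        ENNReal.ofReal ‖vt x - FF vt ρ x‖ ≤ ENNReal.ofReal ρ * G := by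
      rw [hG]
      exact dev_lintegral_bound hωo hvtdiff hvtm hvti hρ fun w hw => hsafe2 w hw.1
    have hAgm : MeasurableSet (ball x₀ ρ \ (ω ∩ {x | max R₀' 0 ≤ ‖vt x‖})) :=
      measurableSet_ball.diff hAbadm
    have key : volume (ball x₀ ρ \ (ω ∩ {x | max R₀' 0 ≤ ‖vt x‖}))
          * ENNReal.ofReal ‖FF vt ρ x₀‖
        ≤ volume (ball x₀ ρ \ (ω ∩ {x | max R₀' 0 ≤ ‖vt x‖}))
            * (ENNReal.ofReal (max R₀' 0)
              + (volume (ball (0 : EuclideanSpace ℝ (Fin m)) ρ))⁻¹ * (ENNReal.ofReal ρ * G))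
          + ENNReal.ofReal ρ * G := by
      calc volume (ball x₀ ρ \ (ω ∩ {x | max R₀' 0 ≤ ‖vt x‖})) * ENNReal.ofReal ‖FF vt ρ x₀‖
          = ∫⁻ _ in ball x₀ ρ \ (ω ∩ {x | max R₀' 0 ≤ ‖vt x‖}),
              ENNReal.ofReal ‖FF vt ρ x₀‖ := by rw [setLIntegral_const, mul_comm]
        _ ≤ ∫⁻ x in ball x₀ ρ \ (ω ∩ {x | max R₀' 0 ≤ ‖vt x‖}),
              (ENNReal.ofReal ‖vt x - FF vt ρ x‖ + (ENNReal.ofReal (max R₀' 0)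
                + (volume (ball (0 : EuclideanSpace ℝ (Fin m)) ρ))⁻¹ * (ENNReal.ofReal ρ * G))) :=
            lintegral_mono_ae ((ae_restrict_iff' hAgm).2 (ae_of_all _ hptA))
        _ = (∫⁻ x in ball x₀ ρ \ (ω ∩ {x | max R₀' 0 ≤ ‖vt x‖}),
              ENNReal.ofReal ‖vt x - FF vt ρ x‖)
              + (ENNReal.ofReal (max R₀' 0)
                + (volume (ball (0 : EuclideanSpace ℝ (Fin m)) ρ))⁻¹ * (ENNReal.ofReal ρ * G))
                * volume (ball x₀ ρ \ (ω ∩ {x | max R₀' 0 ≤ ‖vt x‖})) := by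
            rw [lintegral_add_right _ measurable_const, setLIntegral_const]
        _ ≤ _ := by
            rw [add_comm, mul_comm]
            exact add_le_add le_rfl hdev2
    -- divide out
    have ha0 : volume (ball x₀ ρ \ (ω ∩ {x | max R₀' 0 ≤ ‖vt x‖})) ≠ 0 := by
      refine fun h => hhalf0 (le_antisymm ?_ (by positivity))
      rw [← h]; exact hAgμ
    have hat : volume (ball x₀ ρ \ (ω ∩ {x | max R₀' 0 ≤ ‖vt x‖})) ≠ ⊤ :=
      ((measure_mono diff_subset).trans_lt measure_ball_lt_top).ne
    have hone : (1:ℝ≥0∞) ≤ volume (ball x₀ ρ \ (ω ∩ {x | max R₀' 0 ≤ ‖vt x‖}))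
        * (volume (ball x₀ ρ) / 2)⁻¹ := by
      rw [← ENNReal.mul_inv_cancel hhalf0 hhalft]
      exact mul_le_mul_right' hAgμ _
    have key2 : volume (ball x₀ ρ \ (ω ∩ {x | max R₀' 0 ≤ ‖vt x‖}))
          * ENNReal.ofReal ‖FF vt ρ x₀‖
        ≤ volume (ball x₀ ρ \ (ω ∩ {x | max R₀' 0 ≤ ‖vt x‖}))
          * (ENNReal.ofReal (max R₀' 0) + CA * G) := by
      refine key.trans ?_
      calc _ ≤ volume (ball x₀ ρ \ (ω ∩ {x | max R₀' 0 ≤ ‖vt x‖}))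
            * (ENNReal.ofReal (max R₀' 0)
              + (volume (ball (0 : EuclideanSpace ℝ (Fin m)) ρ))⁻¹ * (ENNReal.ofReal ρ * G))
          + (volume (ball x₀ ρ \ (ω ∩ {x | max R₀' 0 ≤ ‖vt x‖}))
              * (volume (ball x₀ ρ) / 2)⁻¹) * (ENNReal.ofReal ρ * G) :=
            add_le_add le_rfl (by
              nth_rewrite 1 [← one_mul (ENNReal.ofReal ρ * G)]
              exact mul_le_mul_right' hone _)
        _ = _ := by
            rw [hCA]
            ring
    exact (ENNReal.mul_le_mul_iff_right ha0 hat).1 key2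
  -- combine with master
  have hmain := hmaster vt hvtdiff hvtm hvti
  rw [← hG] at hmain
  have hz1 : ENNReal.ofReal ‖z‖ ≤ Z := by
    have hzv : z = ((volume ω).toReal)⁻¹ • ∫ x in ω, vt x := by
      rw [← havg, setAverage_eq]
      congr 1
      exact setIntegral_congr_fun hωo.measurableSet (fun x hx => (hvteq x hx).symm)
    calc ENNReal.ofReal ‖z‖
        = ENNReal.ofReal (((volume ω).toReal)⁻¹ * ‖∫ x in ω, vt x‖) := by
          rw [hzv, norm_smul, Real.norm_eq_abs, abs_of_nonneg (by positivity)]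
      _ ≤ ENNReal.ofReal (((volume ω).toReal)⁻¹ * ∫ x in ω, ‖vt x‖) :=
          ENNReal.ofReal_le_ofReal
            (mul_le_mul_of_nonneg_left (norm_integral_le_integral_norm _) (by positivity))
      _ = (volume ω)⁻¹ * ∫⁻ x in ω, (‖vt x‖₊ : ℝ≥0∞) := by
          rw [ENNReal.ofReal_mul (by positivity), ofReal_toReal_inv _ hμω0 hμωt,
            ofReal_integral_norm_eq_lintegral_nnnorm hvti]
      _ ≤ (volume ω)⁻¹ * (C₁ * G + C₂ * ENNReal.ofReal ‖FF vt ρ x₀‖) :=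
          mul_le_mul_left' hmain _
      _ ≤ (volume ω)⁻¹ * (C₁ * G + C₂ * (ENNReal.ofReal (max R₀' 0) + CA * G)) :=
          mul_le_mul_left' (add_le_add le_rfl (mul_le_mul_left' hanchor _)) _
      _ = (volume ω)⁻¹ * ((C₁ + C₂ * CA) * G + C₂ * ENNReal.ofReal (max R₀' 0)) := by
          congr 1
          ring
      _ ≤ Z := by
          rw [hZ]
          exact mul_le_mul_left' (add_le_add (mul_le_mul_left' hGb _) le_rfl) _
  have hz2 : ‖z‖ ≤ Z.toReal := by
    have h := ENNReal.toReal_mono hZtop hz1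
    rwa [ENNReal.toReal_ofReal (norm_nonneg z)] at h
  linarith
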